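/- For any word X over the alphabet Ψ: if the image of X·t in the algebra H is 0, then the image of X in H is 0; and if the image of s·X in H is 0, then the image of X in H is 0. -/

import Mathlib

noncomputable section

/-- Direction of the head movement of the Turing machine. -/
inductive Dir
  | L
  | R
deriving DecidableEq

/-- The instruction table of Minsky's universal Turing machine: for a state `i` and a color `j`,
`instr i j` is `some (d, q, p)` where `d` is the direction of the head movement, `q` the new
state and `p` the new color of the current cell; it is `none` exactly for the STOP pair
`(4, 3)`. -/
def instr : Fin 7 → Fin 4 → Option (Dir × Fin 7 × Fin 4) := fun i j =>
  match i.val, j.val with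
  | 0, 0 => some (Dir.L, 4, 1)
  | 0, 1 => some (Dir.L, 1, 3)
  | 0, 2 => some (Dir.R, 0, 0)
  | 0, 3 => some (Dir.R, 0, 1)
  | 1, 0 => some (Dir.L, 1, 2)
  | 1, 1 => some (Dir.L, 1, 3)
  | 1, 2 => some (Dir.R, 0, 0)
  | 1, 3 => some (Dir.L, 1, 3)
  | 2, 0 => some (Dir.R, 2, 2)
  | 2, 1 => some (Dir.R, 2, 1)
  | 2, 2 => some (Dir.R, 2, 0)
  | 2, 3 => some (Dir.L, 4, 1)
  | 3, 0 => some (Dir.R, 3, 2)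
  | 3, 1 => some (Dir.R, 3, 1)
  | 3, 2 => some (Dir.R, 3, 0)
  | 3, 3 => some (Dir.L, 4, 0)
  | 4, 0 => some (Dir.L, 5, 2)
  | 4, 1 => some (Dir.L, 4, 1)
  | 4, 2 => some (Dir.L, 4, 0)
  | 4, 3 => none
  | 5, 0 => some (Dir.L, 5, 2)
  | 5, 1 => some (Dir.L, 5, 1)
  | 5, 2 => some (Dir.L, 6, 2)
  | 5, 3 => some (Dir.R, 2, 1)
  | 6, 0 => some (Dir.R, 0, 3)
  | 6, 1 => some (Dir.R, 6, 3)
  | 6, 2 => some (Dir.R, 6, 2)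
  | 6, 3 => some (Dir.R, 3, 1)
  | _, _ => none

/-- The alphabet `Ψ = {t, s, a_0, …, a_3, Q_0, …, Q_6, P_0, …, P_3, L, R}`. -/
inductive Psi
  | t
  | s
  | a (k : Fin 4)
  | Q (i : Fin 7)
  | P (j : Fin 4)
  | L
  | R
deriving DecidableEq, Fintype

/-- The image in the free algebra of a word over the alphabet `Ψ`. -/
def wrd (K : Type*) [Field K] (l : List Psi) : FreeAlgebra K Psi :=
  (l.map (FreeAlgebra.ι K)).prod

open Psi in
/-- The defining relations of the algebra `H`. -/
inductive HRel (K : Type*) [Field K] : FreeAlgebra K Psi → FreeAlgebra K Psi → Prop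
  | rel1 (k : Fin 4) :
      HRel K (wrd K [t, L, a k]) (wrd K [L, t, a k])
  | rel2 (k l : Fin 4) :
      HRel K (wrd K [t, a k, a l]) (wrd K [a k, t, a l])
  | rel9 :
      HRel K (wrd K [s, R]) (wrd K [R, s])
  | rel8 (k : Fin 4) :
      HRel K (wrd K [s, a k]) (wrd K [a k, s])
  | rel3 (i : Fin 7) (j : Fin 4) (q : Fin 7) (p : Fin 4) (k : Fin 4)
      (h : instr i j = some (Dir.L, q, p)) :
      HRel K (wrd K [t, a k, Q i, P j]) (wrd K [Q q, P k, a p, s])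
  | rel5 (i : Fin 7) (j : Fin 4) (q : Fin 7) (p : Fin 4)
      (h : instr i j = some (Dir.L, q, p)) :
      HRel K (wrd K [t, L, Q i, P j]) (wrd K [L, Q q, P 0, a p, s])
  | rel4 (i : Fin 7) (j : Fin 4) (q : Fin 7) (p : Fin 4) (l k : Fin 4)
      (h : instr i j = some (Dir.R, q, p)) :
      HRel K (wrd K [t, a l, Q i, P j, a k]) (wrd K [a l, a p, Q q, P k, s])
  | rel4b (i : Fin 7) (j : Fin 4) (q : Fin 7) (p : Fin 4) (k : Fin 4)
      (h : instr i j = some (Dir.R, q, p)) :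
      HRel K (wrd K [t, L, Q i, P j, a k]) (wrd K [L, a p, Q q, P k, s])
  | rel6 (i : Fin 7) (j : Fin 4) (q : Fin 7) (p : Fin 4) (l : Fin 4)
      (h : instr i j = some (Dir.R, q, p)) :
      HRel K (wrd K [t, a l, Q i, P j, R]) (wrd K [a l, a p, Q q, P 0, R, s])
  | rel6b (i : Fin 7) (j : Fin 4) (q : Fin 7) (p : Fin 4)
      (h : instr i j = some (Dir.R, q, p)) :
      HRel K (wrd K [t, L, Q i, P j, R]) (wrd K [L, a p, Q q, P 0, R, s])
  | rel7 :
      HRel K (wrd K [Q 4, P 3]) 0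

/-- The algebra `H`: the quotient of the free associative unital `K`-algebra on `Ψ` by the
two-sided ideal generated by the defining relations. -/
abbrev AlgH (K : Type*) [Field K] := RingQuot (HRel K)

/-- The image in `H` of a word over the alphabet `Ψ`. -/
def mkw (K : Type*) [Field K] (l : List Psi) : AlgH K :=
  RingQuot.mkAlgHom K (HRel K) (wrd K l)

/-- The image of the letter `t` in `H`. -/
def tEl (K : Type*) [Field K] : AlgH K := mkw K [Psi.t]

/-- The image of the letter `s` in `H`. -/
def sEl (K : Type*) [Field K] : AlgH K := mkw K [Psi.s]

section Aux

open Psi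

variable {K : Type*} [Field K]

/-- Letters commuting with `s` (the `a k` and `R`). -/
def inC : Psi → Bool
  | .a _ => true
  | .R => true
  | _ => false

/-- Strip a leading `s` modulo a prefix of letters in `C`. -/
def stripS : List Psi → Option (List Psi)
  | [] => none
  | c :: l => if c = Psi.s then some l
      else if inC c then (stripS l).map (c :: ·) else none

/-- Strip a trailing `t`. -/
def endT : List Psi → Option (List Psi)
  | [] => none
  | [c] => if c = Psi.t then some [] else none
  | c :: l => (endT l).map (c :: ·)

lemma endT_cons (d : Psi) (m : List Psi) (h : m ≠ []) :
    endT (d :: m) = (endT m).map (d :: ·) := by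
  cases m with
  | nil => exact absurd rfl h
  | cons e m' => rfl

lemma endT_append (l : List Psi) (c : Psi) :
    endT (l ++ [c]) = if c = Psi.t then some l else none := by
  induction l with
  | nil => rfl
  | cons d l ih =>
    rw [List.cons_append, endT_cons d _ (by simp), ih]
    by_cases h : c = Psi.t <;> simp [h]

lemma wrd_nil : wrd K [] = 1 := rfl

lemma wrd_cons (c : Psi) (l : List Psi) :
    wrd K (c :: l) = FreeAlgebra.ι K c * wrd K l := by
  simp [wrd]

lemma wrd_append (u v : List Psi) : wrd K (u ++ v) = wrd K u * wrd K v := by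
  simp [wrd]

abbrev MA (K : Type*) [Field K] := MonoidAlgebra K (FreeMonoid Psi)

def eqMA (K : Type*) [Field K] : FreeAlgebra K Psi ≃ₐ[K] MA K :=
  FreeAlgebra.equivMonoidAlgebraFreeMonoid

lemma eqMA_ι (c : Psi) :
    eqMA K (FreeAlgebra.ι K c) = MonoidAlgebra.single (FreeMonoid.of c) 1 := by
  simp [eqMA, FreeAlgebra.equivMonoidAlgebraFreeMonoid, MonoidAlgebra.of_apply]

lemma eqMA_wrd (l : List Psi) :
    eqMA K (wrd K l) = MonoidAlgebra.single (FreeMonoid.ofList l) 1 := by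
  induction l with
  | nil => simpa [wrd_nil] using (MonoidAlgebra.one_def (R := K) (M := FreeMonoid Psi))
  | cons c l ih =>
    rw [wrd_cons, map_mul, eqMA_ι, ih, MonoidAlgebra.single_mul_single, one_mul]
    rfl

lemma eqMA_symm_single (w : FreeMonoid Psi) (k : K) :
    (eqMA K).symm (MonoidAlgebra.single w k) = k • wrd K (FreeMonoid.toList w) := by
  have h1 : MonoidAlgebra.single w k = k • MonoidAlgebra.single w (1 : K) := by
    simp [MonoidAlgebra.smul_single']
  rw [h1, map_smul]
  congr 1
  have : MonoidAlgebra.single w (1:K)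
      = eqMA K (wrd K (FreeMonoid.toList w)) := by rw [eqMA_wrd]; rfl
  rw [this, AlgEquiv.symm_apply_apply]

/-- Basis induction for the free algebra. -/
lemma fa_induction {P : FreeAlgebra K Psi → Prop} (h0 : P 0)
    (hadd : ∀ x y, P x → P y → P (x + y))
    (hs : ∀ (k : K) (l : List Psi), P (k • wrd K l)) (x : FreeAlgebra K Psi) : P x := by
  have hx : x = (eqMA K).symm (eqMA K x) := ((eqMA K).symm_apply_apply x).symm
  rw [hx]
  generalize (eqMA K x) = p
  induction p using MonoidAlgebra.induction_linear with
  | zero => simpa using h0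
  | add f g hf hg => rw [map_add]; exact hadd _ _ hf hg
  | single w k => rw [eqMA_symm_single]; exact hs _ _

noncomputable def dT (K : Type*) [Field K] : MA K →ₗ[K] MA K :=
  (MonoidAlgebra.coeffLinearEquiv K).symm.toLinearMap ∘ₗ (Finsupp.lsum K fun w =>
    (endT (FreeMonoid.toList w)).elim 0 fun l => Finsupp.lsingle (FreeMonoid.ofList l))
    ∘ₗ (MonoidAlgebra.coeffLinearEquiv K).toLinearMap

noncomputable def dS (K : Type*) [Field K] : MA K →ₗ[K] MA K :=
  (MonoidAlgebra.coeffLinearEquiv K).symm.toLinearMap ∘ₗ (Finsupp.lsum K fun w =>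
    (stripS (FreeMonoid.toList w)).elim 0 fun l => Finsupp.lsingle (FreeMonoid.ofList l))
    ∘ₗ (MonoidAlgebra.coeffLinearEquiv K).toLinearMap

lemma dT_single (w : FreeMonoid Psi) (k : K) :
    dT K (MonoidAlgebra.single w k)
      = (endT (FreeMonoid.toList w)).elim 0 fun l => MonoidAlgebra.single (FreeMonoid.ofList l) k := by
  rw [dT]
  simp only [LinearMap.coe_comp, Function.comp_apply, LinearEquiv.coe_coe,
    MonoidAlgebra.coeffLinearEquiv_apply, MonoidAlgebra.coeff_single, Finsupp.lsum_single]
  cases endT (FreeMonoid.toList w) <;>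
    simp [MonoidAlgebra.coeffLinearEquiv_symm_apply, MonoidAlgebra.ofCoeff_single]

lemma dS_single (w : FreeMonoid Psi) (k : K) :
    dS K (MonoidAlgebra.single w k)
      = (stripS (FreeMonoid.toList w)).elim 0 fun l => MonoidAlgebra.single (FreeMonoid.ofList l) k := by
  rw [dS]
  simp only [LinearMap.coe_comp, Function.comp_apply, LinearEquiv.coe_coe,
    MonoidAlgebra.coeffLinearEquiv_apply, MonoidAlgebra.coeff_single, Finsupp.lsum_single]
  cases stripS (FreeMonoid.toList w) <;>
    simp [MonoidAlgebra.coeffLinearEquiv_symm_apply, MonoidAlgebra.ofCoeff_single]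

noncomputable def DF (K : Type*) [Field K] : FreeAlgebra K Psi →ₗ[K] FreeAlgebra K Psi :=
  (eqMA K).symm.toLinearMap ∘ₗ dT K ∘ₗ (eqMA K).toLinearMap

noncomputable def SF (K : Type*) [Field K] : FreeAlgebra K Psi →ₗ[K] FreeAlgebra K Psi :=
  (eqMA K).symm.toLinearMap ∘ₗ dS K ∘ₗ (eqMA K).toLinearMap

lemma DF_wrd (l : List Psi) : DF K (wrd K l) = (endT l).elim 0 (wrd K) := by
  rw [DF]
  simp only [LinearMap.coe_comp, Function.comp_apply, AlgEquiv.toLinearMap_apply,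
    eqMA_wrd, dT_single]
  cases h : endT (FreeMonoid.toList (FreeMonoid.ofList l)) with
  | none =>
    rw [(show endT l = none from h)]
    simp
  | some l' =>
    rw [(show endT l = some l' from h)]
    simp [eqMA_symm_single, FreeMonoid.toList_ofList]

lemma SF_wrd (l : List Psi) : SF K (wrd K l) = (stripS l).elim 0 (wrd K) := by
  rw [SF]
  simp only [LinearMap.coe_comp, Function.comp_apply, AlgEquiv.toLinearMap_apply,
    eqMA_wrd, dS_single]
  cases h : stripS (FreeMonoid.toList (FreeMonoid.ofList l)) with
  | none =>
    rw [(show stripS l = none from h)]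
    simp
  | some l' =>
    rw [(show stripS l = some l' from h)]
    simp [eqMA_symm_single, FreeMonoid.toList_ofList]

end Aux

section Aux2

open Psi

variable {K : Type*} [Field K]

noncomputable def betaD (K : Type*) [Field K] : FreeAlgebra K Psi →ₐ[K] FreeAlgebra K Psi :=
  FreeAlgebra.lift K fun _ => (0 : FreeAlgebra K Psi)

noncomputable def piC (K : Type*) [Field K] : FreeAlgebra K Psi →ₐ[K] FreeAlgebra K Psi :=
  FreeAlgebra.lift K fun c => if inC c then FreeAlgebra.ι K c else 0

lemma betaD_wrd (l : List Psi) : betaD K (wrd K l) = if l = [] then 1 else 0 := by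
  cases l with
  | nil => simp [wrd_nil]
  | cons c l => simp [wrd_cons, map_mul, betaD, FreeAlgebra.lift_ι_apply]

lemma piC_wrd (l : List Psi) : piC K (wrd K l) = if l.all inC then wrd K l else 0 := by
  induction l with
  | nil => simp [wrd_nil]
  | cons c l ih =>
    rw [wrd_cons, map_mul, ih]
    have h1 : piC K (FreeAlgebra.ι K c) = if inC c then FreeAlgebra.ι K c else 0 := by
      simp [piC, FreeAlgebra.lift_ι_apply]
    rw [h1]
    by_cases hc : inC c <;> by_cases hl : l.all inC <;>
      simp [hc, hl, List.all_cons, wrd_cons]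

lemma allC_stripS (l : List Psi) (h : l.all inC = true) : stripS l = none := by
  induction l with
  | nil => rfl
  | cons c l ih =>
    rw [List.all_cons, Bool.and_eq_true] at h
    have hcs : c ≠ Psi.s := by
      intro hc; subst hc; simp [inC] at h
    rw [stripS, if_neg hcs, if_pos h.1, ih h.2]
    rfl

lemma stripS_append (u v : List Psi) :
    stripS (u ++ v) = if u.all inC then (stripS v).map (u ++ ·)
      else (stripS u).map (· ++ v) := by
  induction u with
  | nil =>
    simp only [List.nil_append, List.all_nil, if_pos]
    cases stripS v <;> simp
  | cons c u ih =>
    by_cases hs : c = Psi.s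
    · subst hs
      simp [stripS, inC, List.all_cons]
    · by_cases hc : inC c
      · rw [List.cons_append, stripS, if_neg hs, if_pos hc, ih,
          stripS, if_neg hs, if_pos hc, List.all_cons, hc, Bool.true_and]
        by_cases hu : u.all inC
        · rw [if_pos hu, if_pos hu]
          cases stripS v <;> simp
        · rw [if_neg hu, if_neg hu]
          cases stripS u <;> simp
      · rw [List.cons_append, stripS, if_neg hs, if_neg hc,
          List.all_cons]
        simp [hc, stripS, hs]

lemma DF_wrd_mul (u v : List Psi) :
    DF K (wrd K u * wrd K v)
      = wrd K u * DF K (wrd K v) + DF K (wrd K u) * betaD K (wrd K v) := by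
  rcases v.eq_nil_or_concat with rfl | ⟨l, c, rfl⟩
  · have h0 : DF K (wrd K []) = 0 := by rw [DF_wrd]; rfl
    rw [betaD_wrd, if_pos rfl, mul_one, h0, mul_zero, zero_add, wrd_nil, mul_one]
  · rw [List.concat_eq_append, ← wrd_append, DF_wrd, DF_wrd, DF_wrd, betaD_wrd,
      ← List.append_assoc, endT_append, endT_append]
    by_cases h : c = Psi.t <;> simp [h, wrd_append]

lemma SF_wrd_mul (u v : List Psi) :
    SF K (wrd K u * wrd K v)
      = SF K (wrd K u) * wrd K v + piC K (wrd K u) * SF K (wrd K v) := by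
  rw [← wrd_append, SF_wrd, SF_wrd, SF_wrd, piC_wrd, stripS_append]
  by_cases h : u.all inC
  · rw [if_pos h, if_pos h, allC_stripS u h]
    cases stripS v <;> simp [wrd_append]
  · rw [if_neg h, if_neg h]
    cases stripS u <;> simp [wrd_append]

lemma DF_mul (x y : FreeAlgebra K Psi) :
    DF K (x * y) = x * DF K y + DF K x * betaD K y := by
  induction x using fa_induction with
  | h0 => simp
  | hadd a b ha hb =>
    simp only [add_mul, map_add, ha, hb]
    abel
  | hs k u =>
    induction y using fa_induction with
    | h0 => simp
    | hadd a b ha hb =>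
      simp only [mul_add, map_add, ha, hb]
      abel
    | hs m v =>
      simp only [smul_mul_assoc, mul_smul_comm, map_smul, DF_wrd_mul, smul_add,
        smul_smul, mul_comm k m]

lemma SF_mul (x y : FreeAlgebra K Psi) :
    SF K (x * y) = SF K x * y + piC K x * SF K y := by
  induction x using fa_induction with
  | h0 => simp
  | hadd a b ha hb =>
    simp only [add_mul, map_add, ha, hb]
    abel
  | hs k u =>
    induction y using fa_induction with
    | h0 => simp
    | hadd a b ha hb =>
      simp only [mul_add, map_add, ha, hb]
      abel
    | hs m v =>
      simp only [smul_mul_assoc, mul_smul_comm, map_smul, SF_wrd_mul, smul_add,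
        smul_smul, mul_comm k m]

end Aux2

section Aux3

open Psi

variable {K : Type*} [Field K]

lemma DF_rel {x y : FreeAlgebra K Psi} (h : HRel K x y) : DF K x = DF K y := by
  cases h <;> simp [DF_wrd, endT]

lemma SF_rel {x y : FreeAlgebra K Psi} (h : HRel K x y) : SF K x = SF K y := by
  cases h <;> simp [SF_wrd, stripS, inC]

lemma betaD_rel {x y : FreeAlgebra K Psi} (h : HRel K x y) : betaD K x = betaD K y := by
  cases h <;> simp [betaD_wrd]

lemma piC_rel {x y : FreeAlgebra K Psi} (h : HRel K x y) : piC K x = piC K y := by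
  cases h <;> simp [piC_wrd, inC]

lemma rel_mk {a b : FreeAlgebra K Psi} (h : RingQuot.Rel (HRel K) a b) :
    RingQuot.mkAlgHom K (HRel K) a = RingQuot.mkAlgHom K (HRel K) b := by
  induction h with
  | of h => exact RingQuot.mkAlgHom_rel K h
  | add_left _ ih => rw [map_add, map_add, ih]
  | mul_left _ ih => rw [map_mul, map_mul, ih]
  | mul_right _ ih => rw [map_mul, map_mul, ih]

/-- Descend an algebra endomorphism compatible with the relations. -/
lemma desc_rel (α : FreeAlgebra K Psi →ₐ[K] FreeAlgebra K Psi)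
    (hα : ∀ ⦃x y⦄, HRel K x y →
      RingQuot.mkAlgHom K (HRel K) (α x) = RingQuot.mkAlgHom K (HRel K) (α y))
    {a b : FreeAlgebra K Psi} (h : RingQuot.Rel (HRel K) a b) :
    RingQuot.mkAlgHom K (HRel K) (α a) = RingQuot.mkAlgHom K (HRel K) (α b) := by
  have hlift := fun x => RingQuot.liftAlgHom_mkAlgHom_apply K
    ((RingQuot.mkAlgHom K (HRel K)).comp α)
    (s := HRel K) (fun x y h => by simpa only [AlgHom.comp_apply] using hα h) x
  simp only [AlgHom.comp_apply] at hlift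
  rw [← hlift a, ← hlift b, rel_mk h]

lemma mk_eq_quot (x : FreeAlgebra K Psi) :
    RingQuot.mkAlgHom K (HRel K) x = ⟨Quot.mk _ x⟩ := by
  simp only [RingQuot.mkAlgHom_def, RingQuot.mkRingHom_def]
  rfl

lemma key_lemma (F : FreeAlgebra K Psi →ₗ[K] FreeAlgebra K Psi)
    (α β : FreeAlgebra K Psi →ₐ[K] FreeAlgebra K Psi)
    (hmul : ∀ x y, F (x * y) = α x * F y + F x * β y)
    (hα : ∀ ⦃x y⦄, HRel K x y →
      RingQuot.mkAlgHom K (HRel K) (α x) = RingQuot.mkAlgHom K (HRel K) (α y))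
    (hβ : ∀ ⦃x y⦄, HRel K x y →
      RingQuot.mkAlgHom K (HRel K) (β x) = RingQuot.mkAlgHom K (HRel K) (β y))
    (hF : ∀ ⦃x y⦄, HRel K x y →
      RingQuot.mkAlgHom K (HRel K) (F x) = RingQuot.mkAlgHom K (HRel K) (F y))
    {a b : FreeAlgebra K Psi} (h : RingQuot.mkAlgHom K (HRel K) a = RingQuot.mkAlgHom K (HRel K) b) :
    RingQuot.mkAlgHom K (HRel K) (F a) = RingQuot.mkAlgHom K (HRel K) (F b) := by
  rw [mk_eq_quot, mk_eq_quot] at h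
  have h' : Relation.EqvGen (RingQuot.Rel (HRel K)) a b :=
    Quot.eqvGen_exact (congrArg RingQuot.toQuot h)
  clear h
  induction h' with
  | rel x y hxy =>
    induction hxy with
    | of h => exact hF h
    | add_left _ ih => rw [map_add, map_add, map_add, map_add, ih]
    | mul_left hab ih =>
      rw [hmul, hmul, map_add, map_add, map_mul, map_mul, map_mul, map_mul, ih,
        desc_rel α hα hab]
    | mul_right hab ih =>
      rw [hmul, hmul, map_add, map_add, map_mul, map_mul, map_mul, map_mul, ih,
        desc_rel β hβ hab]
  | refl x => rfl
  | symm x y _ ih => exact ih.symm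
  | trans x y z _ _ ih1 ih2 => exact ih1.trans ih2

end Aux3

section Final

variable {K : Type*} [Field K]

lemma cancel_t {a b : FreeAlgebra K Psi}
    (h : RingQuot.mkAlgHom K (HRel K) a = RingQuot.mkAlgHom K (HRel K) b) :
    RingQuot.mkAlgHom K (HRel K) (DF K a) = RingQuot.mkAlgHom K (HRel K) (DF K b) := by
  refine key_lemma (DF K) (AlgHom.id K _) (betaD K) ?_ ?_ ?_ ?_ h
  · intro x y; simpa using DF_mul x y
  · intro x y hxy
    simpa using RingQuot.mkAlgHom_rel K hxy
  · intro x y hxy; rw [betaD_rel hxy]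

  · intro x y hxy; rw [DF_rel hxy]

lemma cancel_s {a b : FreeAlgebra K Psi}
    (h : RingQuot.mkAlgHom K (HRel K) a = RingQuot.mkAlgHom K (HRel K) b) :
    RingQuot.mkAlgHom K (HRel K) (SF K a) = RingQuot.mkAlgHom K (HRel K) (SF K b) := by
  refine key_lemma (SF K) (piC K) (AlgHom.id K _) ?_ ?_ ?_ ?_ h
  · intro x y
    simp only [AlgHom.coe_id, id_eq]
    rw [SF_mul, add_comm]
  · intro x y hxy; rw [piC_rel hxy]
  · intro x y hxy
    simpa using RingQuot.mkAlgHom_rel K hxy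
  · intro x y hxy; rw [SF_rel hxy]

end Final

/-- For any word `X` over `Ψ`: if the image of `X·t` in `H` is `0` then the
image of `X` in `H` is `0`; and if the image of `s·X` in `H` is `0` then the image of `X` in
`H` is `0`. -/
theorem cancel_t_right_s_left (K : Type*) [Field K] (X : List Psi) :
    (mkw K (X ++ [Psi.t]) = 0 → mkw K X = 0) ∧
    (mkw K (Psi.s :: X) = 0 → mkw K X = 0) := by
  constructor
  · intro h
    have h0 : RingQuot.mkAlgHom K (HRel K) (wrd K (X ++ [Psi.t]))
        = RingQuot.mkAlgHom K (HRel K) 0 := by rw [map_zero]; exact h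
    have hk := cancel_t h0
    have hDF : DF K (wrd K (X ++ [Psi.t])) = wrd K X := by
      rw [DF_wrd, endT_append, if_pos rfl]
      rfl
    rw [hDF, map_zero, map_zero] at hk
    exact hk
  · intro h
    have h0 : RingQuot.mkAlgHom K (HRel K) (wrd K (Psi.s :: X))
        = RingQuot.mkAlgHom K (HRel K) 0 := by rw [map_zero]; exact h
    have hk := cancel_s h0
    have hSF : SF K (wrd K (Psi.s :: X)) = wrd K X := by
      simp [SF_wrd, stripS]
    rw [hSF, map_zero, map_zero] at hk
    exact hk
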